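/- For every nonzero complex number a, the matrix exponential of the 2×2 complex matrix X_D = [[log a + 2πi, a⁻¹], [0, log a − 2πi]] equals the diagonal matrix [[a, 0], [0, a]] (that is, a times the identity), where log denotes the principal branch of the complex logarithm. In particular exp(X_D) = B where B = a·I, and not the matrix [[a,1],[0,a]]. -/

import Mathlib

/-- The matrix exponential of the nonprimary logarithm
`X_D = [[log a + 2πi, a⁻¹], [0, log a − 2πi]]` is the diagonal matrix `a·I = [[a, 0], [0, a]]`,
for every nonzero complex number `a` — and not the matrix `[[a, 1], [0, a]]`.  Here `log`
is the principal branch of the complex logarithm. -/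
theorem exp_nonprimary_log_is_scalar (a : ℂ) (ha : a ≠ 0) :
    NormedSpace.exp
        (!![Complex.log a + 2 * Real.pi * Complex.I, a⁻¹;
            0, Complex.log a - 2 * Real.pi * Complex.I]) = !![a, 0; 0, a] ∧
    NormedSpace.exp
        (!![Complex.log a + 2 * Real.pi * Complex.I, a⁻¹;
            0, Complex.log a - 2 * Real.pi * Complex.I])
      = a • (1 : Matrix (Fin 2) (Fin 2) ℂ) ∧
    NormedSpace.exp
        (!![Complex.log a + 2 * Real.pi * Complex.I, a⁻¹;
            0, Complex.log a - 2 * Real.pi * Complex.I]) ≠ !![a, 1; 0, a] := by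
  set P : Matrix (Fin 2) (Fin 2) ℂ := !![1, 1; 0, -(4 * Real.pi * Complex.I * a)] with hP
  have hdet : P.det = -(4 * Real.pi * Complex.I * a) := by
    simp [hP, Matrix.det_fin_two_of]
  have hdetne : P.det ≠ 0 := by
    rw [hdet]
    simp [Real.pi_ne_zero, Complex.I_ne_zero, ha]
  have hU : IsUnit P := (Matrix.isUnit_iff_isUnit_det _).mpr hdetne.isUnit
  have hPinv : P⁻¹ = (-(4 * Real.pi * Complex.I * a))⁻¹ •
      !![-(4 * Real.pi * Complex.I * a), -1; 0, 1] := by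
    rw [Matrix.inv_def, hdet, Matrix.adjugate_fin_two]
    simp [hP, Ring.inverse_eq_inv]
  have hpi : (Real.pi : ℂ) ≠ 0 := by exact_mod_cast Real.pi_ne_zero
  have hI : Complex.I ≠ 0 := Complex.I_ne_zero
  have key : !![Complex.log a + 2 * Real.pi * Complex.I, a⁻¹;
            0, Complex.log a - 2 * Real.pi * Complex.I]
      = P * (Matrix.diagonal ![Complex.log a + 2 * Real.pi * Complex.I,
            Complex.log a - 2 * Real.pi * Complex.I]) * P⁻¹ := by
    rw [hPinv, hP]
    ext i j
    fin_cases i <;> fin_cases j <;>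
      simp [Matrix.mul_apply, Fin.sum_univ_two, Matrix.diagonal_apply, Matrix.vecHead, Matrix.vecTail, Matrix.vecMul_diagonal] <;>
      field_simp <;> ring_nf <;> simp only [Complex.I_sq, pow_three, Complex.I_mul_I] <;> ring
  have hexpd : NormedSpace.exp (Complex.log a + 2 * Real.pi * Complex.I) = a := by
    rw [← Complex.exp_eq_exp_ℂ, Complex.exp_add, Complex.exp_log ha]
    rw [show (2 : ℂ) * Real.pi * Complex.I = 2 * Real.pi * Complex.I by ring]
    simp [Complex.exp_two_pi_mul_I]
  have hexpd2 : NormedSpace.exp (Complex.log a - 2 * Real.pi * Complex.I) = a := by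
    rw [← Complex.exp_eq_exp_ℂ, Complex.exp_sub, Complex.exp_log ha, Complex.exp_two_pi_mul_I]
    simp
  have hmain : NormedSpace.exp
        (!![Complex.log a + 2 * Real.pi * Complex.I, a⁻¹;
            0, Complex.log a - 2 * Real.pi * Complex.I]) = a • (1 : Matrix (Fin 2) (Fin 2) ℂ) := by
    rw [key, Matrix.exp_conj P _ hU, Matrix.exp_diagonal]
    have : (NormedSpace.exp ![Complex.log a + 2 * Real.pi * Complex.I,
        Complex.log a - 2 * Real.pi * Complex.I]) = ![a, a] := by
      ext i; rw [Pi.exp_def]; fin_cases i <;> simp [hexpd, hexpd2]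
    rw [show NormedSpace.exp ![Complex.log a + 2 * Real.pi * Complex.I,
        Complex.log a - 2 * Real.pi * Complex.I] = ![a, a] from this]
    have : Matrix.diagonal ![a, a] = a • (1 : Matrix (Fin 2) (Fin 2) ℂ) := by
      ext i j; fin_cases i <;> fin_cases j <;> simp [Matrix.diagonal]
    rw [this]
    rw [Matrix.mul_smul, Matrix.mul_one, Matrix.smul_mul, Matrix.mul_nonsing_inv _ hdetne.isUnit]
  refine ⟨?_, hmain, ?_⟩
  · rw [hmain]; ext i j; fin_cases i <;> fin_cases j <;> simp
  · rw [hmain]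
    intro h
    have := congr_fun (congr_fun h 0) 1
    simp at this
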